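/- Let r ≥ 1 and let M be an r × r matrix with entries in the polynomial ring ℂ[z], and suppose the evaluation N = M(0) satisfies N² = 0 and rank(N) ≤ 1. Then z divides Tr(M²) in ℂ[z], and z² divides Tr(M³) in ℂ[z]. -/

import Mathlib

open Polynomial Matrix

/-- If a polynomial matrix `M ∈ M_r(ℂ[z])` has value at `z = 0` in the closure of the
minimal nilpotent orbit (square-zero of rank at most one), then `z ∣ Tr(M²)` and
`z² ∣ Tr(M³)`. -/
theorem trace_divisibility_min_nilpotent (r : ℕ) (hr : 1 ≤ r)
    (M : Matrix (Fin r) (Fin r) (Polynomial ℂ))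
    (hsq : (M.map (fun q => q.eval 0)) ^ 2 = 0)
    (hrk : (M.map (fun q => q.eval 0)).rank ≤ 1) :
    (Polynomial.X : Polynomial ℂ) ∣ Matrix.trace (M ^ 2) ∧
      (Polynomial.X : Polynomial ℂ) ^ 2 ∣ Matrix.trace (M ^ 3) := by
  classical
  set Nc : Matrix (Fin r) (Fin r) (Polynomial ℂ) :=
    (M.map (fun q => q.eval 0)).map (Polynomial.C : ℂ → Polynomial ℂ) with hNcdef
  set B : Matrix (Fin r) (Fin r) (Polynomial ℂ) := fun i j => M i j /ₘ X with hBdef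
  set P : Matrix (Fin r) (Fin r) (Polynomial ℂ) := (X : Polynomial ℂ) • B with hPdef
  have hM : M = Nc + P := by
    refine Matrix.ext fun i j => ?_
    simp only [hPdef, hNcdef, hBdef, Matrix.add_apply, Matrix.smul_apply, Matrix.map_apply,
      smul_eq_mul]
    rw [← modByMonic_X (M i j)]
    exact (modByMonic_add_div (M i j) X).symm
  have hNc2' : Nc * Nc = 0 := by
    have h0 : (M.map (fun q => q.eval 0)) * (M.map (fun q => q.eval 0)) = 0 := by
      rw [← pow_two]; exact hsq
    have := congrArg (fun A => A.map (Polynomial.C : ℂ → Polynomial ℂ)) h0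
    rw [Matrix.map_mul (f := (Polynomial.C : ℂ →+* Polynomial ℂ))] at this
    simpa [hNcdef] using this
  constructor
  · rw [hM]
    have expand : (Nc + P) ^ 2 = Nc * Nc + (Nc * P + (P * Nc + P * P)) := by
      noncomm_ring
    rw [expand, hNc2', zero_add, Matrix.trace_add, Matrix.trace_add]
    simp only [hPdef, Matrix.mul_smul, Matrix.smul_mul, smul_smul, Matrix.trace_smul,
      smul_eq_mul]
    exact dvd_add (dvd_mul_right _ _) (dvd_add (dvd_mul_right _ _)
      ((dvd_mul_right X X).mul_right _))
  · rw [hM]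
    have expand : (Nc + P) ^ 3 =
        Nc * Nc * Nc + Nc * Nc * P + Nc * P * Nc + P * (Nc * Nc)
          + Nc * (P * P) + P * Nc * P + P * P * Nc + P * P * P := by
      noncomm_ring
    rw [expand, hNc2']
    simp only [Matrix.mul_zero, Matrix.zero_mul, zero_add, add_zero, Matrix.trace_add]
    have h1 : Matrix.trace (Nc * P * Nc) = 0 := by
      rw [Matrix.trace_mul_comm, ← Matrix.mul_assoc, hNc2', Matrix.zero_mul, Matrix.trace_zero]
    rw [h1, zero_add]
    simp only [hPdef, Matrix.mul_smul, Matrix.smul_mul, smul_smul, Matrix.trace_smul,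
      smul_eq_mul, pow_two]
    refine dvd_add (dvd_add (dvd_add ?_ ?_) ?_) ?_
    · exact dvd_mul_right _ _
    · exact dvd_mul_right _ _
    · exact dvd_mul_right _ _
    · exact (dvd_mul_left (X * X) X).mul_right _
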